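/- (Theorem 6, bound (16)) Let p* be a Borel probability distribution on X×Y with feature expectation τ_∞ = E_{p*}{Φ}, let μ* be a minimizer of min_{μ ∈ ℝ^m} 1 − τᵀμ + φ(μ) + λᵀ|μ|, let μ_∞ be a minimizer of min_{μ ∈ ℝ^m} 1 − τ_∞ᵀμ + φ(μ) with optimal value R_Φ, and let h^U be a classification rule satisfying h^U(y|x) ≥ Φ(x,y)ᵀμ* − φ(μ*) for all x ∈ X and y ∈ Y. Then the error probability R(h^U) = ℓ(h^U,p*) satisfies R(h^U) ≤ R_Φ + |τ_∞ − τ|ᵀ|μ_∞ − μ*| + λᵀ(|μ_∞| − |μ*|). -/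

import Mathlib

open MeasureTheory

noncomputable section

/-- A (randomized) classification rule. -/
def IsRule {d K : ℕ} (Xs : Set (Fin d → ℝ)) (h : ↥Xs → Fin K → ℝ) : Prop :=
  (∀ x y, 0 ≤ h x y) ∧ (∀ x, ∑ y, h x y = 1) ∧ ∀ y, Measurable fun x => h x y

/-- Expected 0-1 loss. -/
def loss {d K : ℕ} {Xs : Set (Fin d → ℝ)} (h : ↥Xs → Fin K → ℝ)
    (p : Measure (↥Xs × Fin K)) : ℝ :=
  ∫ z, (1 - h z.1 z.2) ∂p

/-- `φ(μ)`. -/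
def phi {d K m : ℕ} {Xs : Set (Fin d → ℝ)} (Φ : ↥Xs × Fin K → Fin m → ℝ)
    (μ : Fin m → ℝ) : ℝ :=
  ⨆ (x : ↥Xs) (C : {C : Finset (Fin K) // C.Nonempty}),
    ((∑ y ∈ C.1, ∑ i, Φ (x, y) i * μ i) - 1) / (C.1.card : ℝ)

/-- Theorem 6, bound (16): `R(h^U) ≤ R_Φ + |τ_∞ − τ|ᵀ|μ_∞ − μ*| + λᵀ(|μ_∞| − |μ*|)`. -/
theorem stmt_12 {d K m : ℕ} (hK : 0 < K)
    (Xs : Set (Fin d → ℝ)) (hXs : MeasurableSet Xs)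
    (Φ : ↥Xs × Fin K → Fin m → ℝ) (hΦmeas : ∀ i, Measurable fun z => Φ z i)
    (B : ℝ) (hΦbdd : ∀ z i, |Φ z i| ≤ B)
    (τ lam : Fin m → ℝ)
    (pstar : Measure (↥Xs × Fin K)) (hpstar : IsProbabilityMeasure pstar)
    (τinf : Fin m → ℝ) (hτinf : ∀ i, τinf i = ∫ z, Φ z i ∂pstar)
    (μs : Fin m → ℝ)
    (hμs : ∀ μ : Fin m → ℝ,
      1 - (∑ i, τ i * μs i) + phi Φ μs + ∑ i, lam i * |μs i| ≤
      1 - (∑ i, τ i * μ i) + phi Φ μ + ∑ i, lam i * |μ i|)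
    (μinf : Fin m → ℝ)
    (hμinf : ∀ μ : Fin m → ℝ,
      1 - (∑ i, τinf i * μinf i) + phi Φ μinf ≤
      1 - (∑ i, τinf i * μ i) + phi Φ μ)
    (h : ↥Xs → Fin K → ℝ) (hrule : IsRule Xs h)
    (hge : ∀ (x : ↥Xs) (y : Fin K), (∑ i, Φ (x, y) i * μs i) - phi Φ μs ≤ h x y) :
    loss h pstar
      ≤ (1 - (∑ i, τinf i * μinf i) + phi Φ μinf)
        + (∑ i, |τinf i - τ i| * |μinf i - μs i|)
        + ∑ i, lam i * (|μinf i| - |μs i|) := by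
  obtain ⟨hnn, hsum, hmeas⟩ := hrule
  have hle1 : ∀ x y, h x y ≤ 1 := by
    intro x y
    calc h x y ≤ ∑ y, h x y :=
          Finset.single_le_sum (fun y _ => hnn x y) (Finset.mem_univ y)
      _ = 1 := hsum x
  set c := phi Φ μs with hc
  -- measurability of the rule as a function of z
  have hmf : Measurable fun z : ↥Xs × Fin K => h z.1 z.2 :=
    measurable_from_prod_countable_left fun y => hmeas y
  have inth : Integrable (fun z : ↥Xs × Fin K => 1 - h z.1 z.2) pstar := by
    refine (integrable_const (1 : ℝ)).mono'
      ((measurable_const.sub hmf).aestronglyMeasurable) (ae_of_all _ fun z => ?_)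
    rw [Real.norm_eq_abs, abs_le]
    constructor
    · linarith [hle1 z.1 z.2]
    · linarith [hnn z.1 z.2]
  have intΦ : ∀ i, Integrable (fun z : ↥Xs × Fin K => Φ z i) pstar := by
    intro i
    refine (integrable_const B).mono' ((hΦmeas i).aestronglyMeasurable)
      (ae_of_all _ fun z => ?_)
    rw [Real.norm_eq_abs]; exact hΦbdd z i
  have intS : Integrable (fun z : ↥Xs × Fin K => ∑ i, Φ z i * μs i) pstar :=
    integrable_finset_sum _ fun i _ => (intΦ i).mul_const (μs i)
  have intg : Integrable (fun z : ↥Xs × Fin K => 1 - ((∑ i, Φ z i * μs i) - c)) pstar := by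
    have : (fun z : ↥Xs × Fin K => 1 - ((∑ i, Φ z i * μs i) - c))
        = fun z => (1 + c) - ∑ i, Φ z i * μs i := by funext z; ring
    rw [this]
    exact (integrable_const (1 + c)).sub intS
  -- step 1: loss ≤ ∫ g
  have step1 : loss h pstar ≤ ∫ z, (1 - ((∑ i, Φ z i * μs i) - c)) ∂pstar := by
    refine integral_mono inth intg fun z => ?_
    have := hge z.1 z.2
    simp only [hc] at this ⊢
    linarith
  -- step 2: compute ∫ g
  have step2 : ∫ z, (1 - ((∑ i, Φ z i * μs i) - c)) ∂pstar
      = 1 - (∑ i, τinf i * μs i) + c := by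
    have hrw : (fun z : ↥Xs × Fin K => 1 - ((∑ i, Φ z i * μs i) - c))
        = fun z => (1 + c) - ∑ i, Φ z i * μs i := by funext z; ring
    rw [hrw, integral_sub (integrable_const (1 + c)) intS, integral_const,
      integral_finset_sum _ fun i _ => (intΦ i).mul_const (μs i)]
    have : ∀ i, ∫ z, Φ z i * μs i ∂pstar = τinf i * μs i := by
      intro i
      rw [integral_mul_const, hτinf i]
    simp only [this, measure_univ, probReal_univ, ENNReal.toReal_one, one_smul]
    ring
  -- step 3: algebra
  have key : ∑ i, (τinf i - τ i) * (μinf i - μs i)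
      ≤ ∑ i, |τinf i - τ i| * |μinf i - μs i| :=
    Finset.sum_le_sum fun i _ => by rw [← abs_mul]; exact le_abs_self _
  have expand : ∑ i, (τinf i - τ i) * (μinf i - μs i)
      = ∑ i, τinf i * μinf i - ∑ i, τinf i * μs i - ∑ i, τ i * μinf i
        + ∑ i, τ i * μs i := by
    simp only [sub_mul, mul_sub, Finset.sum_sub_distrib, Finset.sum_add_distrib]
    ring
  have lamexp : ∑ i, lam i * (|μinf i| - |μs i|)
      = ∑ i, lam i * |μinf i| - ∑ i, lam i * |μs i| := by
    simp only [mul_sub, Finset.sum_sub_distrib]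
  have hopt := hμs μinf
  
  linarith [step1, step2]

end
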